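/- Let q ≥ 3 be an odd integer (q = 2r − 1 for an integer r ≥ 2) and let Pₙ be the polynomials defined by P₀(x) = 1, P₁(x) = x, P_{n+1}(x) = ((q+1)/q)·x·Pₙ(x) − (1/q)·P_{n−1}(x). Then for every n ∈ ℕ and every real number x, Pₙ(x) = [ (2/(q+1))·Tₙ( ((q+1)/(2√q))·x ) + ((q−1)/(q+1))·Uₙ( ((q+1)/(2√q))·x ) ]·q^{−n/2}, where Tₙ and Uₙ are the Chebyshev polynomials of the first and second kind. -/

import Mathlib

noncomputable section

/-- The spherical polynomials `Pₙ` for the parameter `q`: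
`P₀ = 1`, `P₁ = X`, `P_{n+2}(x) = ((q+1)/q)·x·P_{n+1}(x) − (1/q)·Pₙ(x)`. -/
def P (q : ℝ) : ℕ → ℝ → ℝ
  | 0 => fun _ => 1
  | 1 => fun s => s
  | (n + 2) => fun s => ((q + 1) / q) * s * P q (n + 1) s - (1 / q) * P q n s

lemma P_aux (s : ℝ) (hs : 0 < s) (n : ℕ) (x : ℝ) :
    P (s ^ 2) n x =
      (2 / (s ^ 2 + 1) *
          (Polynomial.Chebyshev.T ℝ n).eval ((s ^ 2 + 1) / (2 * s) * x) +
        (s ^ 2 - 1) / (s ^ 2 + 1) *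
          (Polynomial.Chebyshev.U ℝ n).eval ((s ^ 2 + 1) / (2 * s) * x)) * (s⁻¹) ^ n := by
  have h1 : s ^ 2 + 1 ≠ 0 := by positivity
  have hs' : s ≠ 0 := hs.ne'
  set y : ℝ := (s ^ 2 + 1) / (2 * s) * x with hy
  induction n using Nat.twoStepInduction with
  | zero =>
    simp only [P, Nat.cast_zero, Polynomial.Chebyshev.T_zero, Polynomial.Chebyshev.U_zero,
      Polynomial.eval_one, pow_zero]
    field_simp
    ring
  | one =>
    simp only [P, Nat.cast_one, Polynomial.Chebyshev.T_one, Polynomial.Chebyshev.U_one,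
      Polynomial.eval_X, Polynomial.eval_mul, Polynomial.eval_ofNat, pow_one, hy]
    field_simp
    ring
  | more n ih1 ih2 =>
    have hT : ((Polynomial.Chebyshev.T ℝ (n + 2 : ℕ)).eval y)
        = 2 * y * (Polynomial.Chebyshev.T ℝ (n + 1 : ℕ)).eval y
          - (Polynomial.Chebyshev.T ℝ (n : ℕ)).eval y := by
      push_cast
      rw [Polynomial.Chebyshev.T_add_two]
      simp
    have hU : ((Polynomial.Chebyshev.U ℝ (n + 2 : ℕ)).eval y)
        = 2 * y * (Polynomial.Chebyshev.U ℝ (n + 1 : ℕ)).eval y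
          - (Polynomial.Chebyshev.U ℝ (n : ℕ)).eval y := by
      push_cast
      rw [Polynomial.Chebyshev.U_add_two]
      simp
    show (s ^ 2 + 1) / s ^ 2 * x * P (s ^ 2) (n + 1) x - 1 / s ^ 2 * P (s ^ 2) n x = _
    rw [ih1, ih2, hT, hU, hy]
    simp only [inv_pow]
    field_simp
    ring

theorem P_eq_chebyshev (q : ℕ) (hq3 : 3 ≤ q) (hqodd : Odd q) (n : ℕ) (x : ℝ) :
    P (q : ℝ) n x =
      (2 / ((q : ℝ) + 1) *
          (Polynomial.Chebyshev.T ℝ n).eval (((q : ℝ) + 1) / (2 * Real.sqrt q) * x) +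
        ((q : ℝ) - 1) / ((q : ℝ) + 1) *
          (Polynomial.Chebyshev.U ℝ n).eval (((q : ℝ) + 1) / (2 * Real.sqrt q) * x)) *
        (q : ℝ) ^ (-(n : ℝ) / 2) := by
  have hq0 : (0 : ℝ) < (q : ℝ) := by positivity
  have hs0 : (0 : ℝ) < Real.sqrt q := Real.sqrt_pos.mpr hq0
  have hkey : (q : ℝ) ^ (-(n : ℝ) / 2) = ((Real.sqrt q)⁻¹) ^ n := by
    rw [Real.sqrt_eq_rpow, ← Real.rpow_neg hq0.le, ← Real.rpow_natCast ((q:ℝ) ^ (-(1/2) : ℝ)) n,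
      ← Real.rpow_mul hq0.le]
    ring_nf
  have hq_eq : (q : ℝ) = (Real.sqrt q) ^ 2 := (Real.sq_sqrt hq0.le).symm
  rw [hkey, hq_eq]
  simp only [Real.sqrt_sq hs0.le]
  exact P_aux (Real.sqrt q) hs0 n x
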